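/- The set of integer lattice points of the polytope ∇*, i.e. the set of v ∈ ℤ⁵ whose image in ℝ⁵ lies in the convex hull of {ν₁,…,ν₁₂}, is exactly the union of: the origin 0; the twelve vertices ν₁,…,ν₁₂; the two points −e₃ and e₃; and the 24 points (ν₍₃ₖ₊ᵢ₎ + 2ν₍₃ₖ₊ⱼ₎)/3 for k ∈ {0,1,2,3} and ordered pairs (i,j) with i,j ∈ {1,2,3}, i ≠ j (each of which is an integer vector). In particular, ∇* has exactly 39 lattice points. -/

import Mathlib

/-- The vertices `ν₁,…,ν₁₂` of the mirror polytope `∇*`, as elements of `ℤ⁵`. -/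
def nuN5 : Fin 12 → (Fin 5 → ℤ) :=
  ![![2, -1, 0, 0, 0],
    ![-1, 2, 0, 0, 0],
    ![-1, -1, 0, 0, 0],
    ![2, -1, -1, 0, 0],
    ![-1, 2, -1, 0, 0],
    ![-1, -1, -1, 0, 0],
    ![0, 0, 0, 2, -1],
    ![0, 0, 0, -1, 2],
    ![0, 0, 0, -1, -1],
    ![0, 0, 1, 2, -1],
    ![0, 0, 1, -1, 2],
    ![0, 0, 1, -1, -1]]

/-- The vertex `ν_{3k+i}` for `k ∈ {0,1,2,3}` and `i ∈ {1,2,3}` (0-based `i`). -/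
def nuIdx (k : Fin 4) (i : Fin 3) : Fin 12 := ⟨3 * k.val + i.val, by omega⟩

/-- The real points of `∇*`: the convex hull in `ℝ⁵` of the vertices `ν₁,…,ν₁₂`. -/
noncomputable def NablaStar : Set (Fin 5 → ℝ) :=
  convexHull ℝ (Set.range (fun j => fun i => ((nuN5 j i : ℤ) : ℝ)))

lemma NablaStar_def : NablaStar = convexHull ℝ (Set.range (fun j => fun i => ((nuN5 j i : ℤ) : ℝ))) := rfl

def Sfin : Finset (Fin 5 → ℤ) :=
  {![-1, -1, -1, 0, 0],
   ![-1, -1, 0, 0, 0],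
   ![-1, 0, -1, 0, 0],
   ![-1, 0, 0, 0, 0],
   ![-1, 1, -1, 0, 0],
   ![-1, 1, 0, 0, 0],
   ![-1, 2, -1, 0, 0],
   ![-1, 2, 0, 0, 0],
   ![0, -1, -1, 0, 0],
   ![0, -1, 0, 0, 0],
   ![0, 0, -1, 0, 0],
   ![0, 0, 0, -1, -1],
   ![0, 0, 0, -1, 0],
   ![0, 0, 0, -1, 1],
   ![0, 0, 0, -1, 2],
   ![0, 0, 0, 0, -1],
   ![0, 0, 0, 0, 0],
   ![0, 0, 0, 0, 1],
   ![0, 0, 0, 1, -1],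
   ![0, 0, 0, 1, 0],
   ![0, 0, 0, 2, -1],
   ![0, 0, 1, -1, -1],
   ![0, 0, 1, -1, 0],
   ![0, 0, 1, -1, 1],
   ![0, 0, 1, -1, 2],
   ![0, 0, 1, 0, -1],
   ![0, 0, 1, 0, 0],
   ![0, 0, 1, 0, 1],
   ![0, 0, 1, 1, -1],
   ![0, 0, 1, 1, 0],
   ![0, 0, 1, 2, -1],
   ![0, 1, -1, 0, 0],
   ![0, 1, 0, 0, 0],
   ![1, -1, -1, 0, 0],
   ![1, -1, 0, 0, 0],
   ![1, 0, -1, 0, 0],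
   ![1, 0, 0, 0, 0],
   ![2, -1, -1, 0, 0],
   ![2, -1, 0, 0, 0]}

def Pset : Set (Fin 5 → ℝ) :=
  {x | (-x 0 - x 3 ≤ 1) ∧
       (-x 0 - x 4 ≤ 1) ∧
       (-x 0 + x 3 + x 4 ≤ 1) ∧
       (-x 0 + x 2 ≤ 1) ∧
       (-x 1 - x 3 ≤ 1) ∧
       (-x 1 - x 4 ≤ 1) ∧
       (-x 1 + x 3 + x 4 ≤ 1) ∧
       (-x 1 + x 2 ≤ 1) ∧
       (-x 2 - x 3 ≤ 1) ∧
       (-x 2 - x 4 ≤ 1) ∧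
       (-x 2 + x 3 + x 4 ≤ 1) ∧
       (x 0 + x 1 - x 3 ≤ 1) ∧
       (x 0 + x 1 - x 4 ≤ 1) ∧
       (x 0 + x 1 + x 3 + x 4 ≤ 1) ∧
       (x 0 + x 1 + x 2 ≤ 1)}

lemma keyineq {a b s t : ℝ} (hs : s ≤ 1) (ht : t ≤ 1) (ha : 0 ≤ a) (hb : 0 ≤ b)
    (hab : a + b = 1) : a * s + b * t ≤ 1 := by nlinarith

lemma vec_eq {v : Fin 5 → ℤ} {a b c d e : ℤ} (h0 : v 0 = a) (h1 : v 1 = b) (h2 : v 2 = c)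
    (h3 : v 3 = d) (h4 : v 4 = e) : v = ![a, b, c, d, e] := by
  funext t; fin_cases t <;> simpa

lemma convex_Pset : Convex ℝ Pset := by
  intro p hp q hq a b ha hb hab
  simp only [Pset, Set.mem_setOf_eq] at hp hq ⊢
  obtain ⟨p0, p1, p2, p3, p4, p5, p6, p7, p8, p9, p10, p11, p12, p13, p14⟩ := hp
  obtain ⟨q0, q1, q2, q3, q4, q5, q6, q7, q8, q9, q10, q11, q12, q13, q14⟩ := hq
  refine ⟨?_, ?_, ?_, ?_, ?_, ?_, ?_, ?_, ?_, ?_, ?_, ?_, ?_, ?_, ?_⟩ <;>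
      simp only [Pi.add_apply, Pi.smul_apply, smul_eq_mul]
  case _ => linarith [keyineq p0 q0 ha hb hab]
  case _ => linarith [keyineq p1 q1 ha hb hab]
  case _ => linarith [keyineq p2 q2 ha hb hab]
  case _ => linarith [keyineq p3 q3 ha hb hab]
  case _ => linarith [keyineq p4 q4 ha hb hab]
  case _ => linarith [keyineq p5 q5 ha hb hab]
  case _ => linarith [keyineq p6 q6 ha hb hab]
  case _ => linarith [keyineq p7 q7 ha hb hab]
  case _ => linarith [keyineq p8 q8 ha hb hab]
  case _ => linarith [keyineq p9 q9 ha hb hab]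
  case _ => linarith [keyineq p10 q10 ha hb hab]
  case _ => linarith [keyineq p11 q11 ha hb hab]
  case _ => linarith [keyineq p12 q12 ha hb hab]
  case _ => linarith [keyineq p13 q13 ha hb hab]
  case _ => linarith [keyineq p14 q14 ha hb hab]

lemma verts_mem_Pset : ∀ j : Fin 12, (fun i => ((nuN5 j i : ℤ) : ℝ)) ∈ Pset := by
  intro j
  fin_cases j <;> (simp only [Pset, Set.mem_setOf_eq, nuN5] <;> norm_num [Matrix.cons_val_two, Matrix.cons_val_three, Matrix.cons_val_four])

lemma hull_sub : NablaStar ⊆ Pset := by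
  rw [NablaStar_def]
  apply convexHull_min _ convex_Pset
  rintro x ⟨j, rfl⟩
  exact verts_mem_Pset j

lemma comb (a b c : Fin 12) (x y z : ℤ) (hx : 0 ≤ x) (hy : 0 ≤ y) (hz : 0 ≤ z)
    (hs : x + y + z = 3) (v : Fin 5 → ℤ)
    (h : ∀ t, 3 * v t = x * nuN5 a t + y * nuN5 b t + z * nuN5 c t) :
    (fun i => ((v i : ℤ) : ℝ)) ∈ NablaStar := by
  have hc : Convex ℝ NablaStar := by rw [NablaStar_def]; exact convex_convexHull ℝ _
  have key := hc.sum_mem (t := (Finset.univ : Finset (Fin 3)))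
      (w := ![(x : ℝ)/3, (y : ℝ)/3, (z : ℝ)/3])
      (z := ![(fun i => ((nuN5 a i : ℤ) : ℝ)), (fun i => ((nuN5 b i : ℤ) : ℝ)),
              (fun i => ((nuN5 c i : ℤ) : ℝ))]) ?_ ?_ ?_
  · have hv : (fun i => ((v i : ℤ) : ℝ)) =
        ∑ n : Fin 3, (![(x : ℝ)/3, (y : ℝ)/3, (z : ℝ)/3]) n •
          (![(fun i => ((nuN5 a i : ℤ) : ℝ)), (fun i => ((nuN5 b i : ℤ) : ℝ)),
             (fun i => ((nuN5 c i : ℤ) : ℝ))]) n := by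
      funext t
      have ht : (3 : ℝ) * ((v t : ℤ) : ℝ) = (x : ℝ) * ((nuN5 a t : ℤ) : ℝ)
          + (y : ℝ) * ((nuN5 b t : ℤ) : ℝ) + (z : ℝ) * ((nuN5 c t : ℤ) : ℝ) := by
        exact_mod_cast h t
      simp only [Fin.sum_univ_three, Matrix.cons_val_zero, Matrix.cons_val_one,
        Matrix.head_cons, Matrix.cons_val_two, Matrix.tail_cons, Pi.add_apply,
        Pi.smul_apply, smul_eq_mul]
      linarith
    rw [hv]; exact key
  · intro i _
    fin_cases i <;>
      simp only [Matrix.cons_val_zero, Matrix.cons_val_one, Matrix.head_cons,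
        Matrix.cons_val_two, Matrix.tail_cons] <;>
      exact div_nonneg (by exact_mod_cast ‹_›) (by norm_num)
  · have hs' : (x : ℝ) + (y : ℝ) + (z : ℝ) = 3 := by exact_mod_cast hs
    simp only [Fin.sum_univ_three, Matrix.cons_val_zero, Matrix.cons_val_one,
      Matrix.head_cons, Matrix.cons_val_two, Matrix.tail_cons]
    linarith
  · intro i _
    rw [NablaStar_def]
    fin_cases i
    · exact subset_convexHull ℝ _ ⟨a, rfl⟩
    · exact subset_convexHull ℝ _ ⟨b, rfl⟩
    · exact subset_convexHull ℝ _ ⟨c, rfl⟩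

set_option maxHeartbeats 1000000 in
lemma solve (v : Fin 5 → ℤ)
    (q0 : -v 0 - v 3 ≤ 1)
    (q1 : -v 0 - v 4 ≤ 1)
    (q2 : -v 0 + v 3 + v 4 ≤ 1)
    (q3 : -v 0 + v 2 ≤ 1)
    (q4 : -v 1 - v 3 ≤ 1)
    (q5 : -v 1 - v 4 ≤ 1)
    (q6 : -v 1 + v 3 + v 4 ≤ 1)
    (q7 : -v 1 + v 2 ≤ 1)
    (q8 : -v 2 - v 3 ≤ 1)
    (q9 : -v 2 - v 4 ≤ 1)
    (q10 : -v 2 + v 3 + v 4 ≤ 1)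
    (q11 : v 0 + v 1 - v 3 ≤ 1)
    (q12 : v 0 + v 1 - v 4 ≤ 1)
    (q13 : v 0 + v 1 + v 3 + v 4 ≤ 1)
    (q14 : v 0 + v 1 + v 2 ≤ 1) : v ∈ Sfin := by
  have hsec : ((v 0 = 0 ∧ v 1 = 0) ∧ v 3 = 0 ∧ v 4 = 0 ∧ (v 2 = -1 ∨ v 2 = 0 ∨ v 2 = 1)) ∨
      ((v 0 = 0 ∧ v 1 = 0) ∧ v 2 = 0 ∧ ¬(v 3 = 0 ∧ v 4 = 0)) ∨
      ((v 0 = 0 ∧ v 1 = 0) ∧ v 2 = 1 ∧ ¬(v 3 = 0 ∧ v 4 = 0)) ∨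
      (¬(v 0 = 0 ∧ v 1 = 0) ∧ v 3 = 0 ∧ v 4 = 0 ∧ (v 2 = -1 ∨ v 2 = 0)) := by omega
  rcases hsec with ⟨⟨h0, h1⟩, h3, h4, hc⟩ | ⟨⟨h0, h1⟩, h2, hne⟩ | ⟨⟨h0, h1⟩, h2, hne⟩ |
    ⟨hne, h3, h4, hc⟩
  · rcases hc with h2 | h2 | h2 <;> (rw [vec_eq h0 h1 h2 h3 h4]; decide)
  · have key : (v 3 = -1 ∧ v 4 = -1) ∨
        (v 3 = -1 ∧ v 4 = 0) ∨
        (v 3 = -1 ∧ v 4 = 1) ∨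
        (v 3 = -1 ∧ v 4 = 2) ∨
        (v 3 = 0 ∧ v 4 = -1) ∨
        (v 3 = 0 ∧ v 4 = 1) ∨
        (v 3 = 1 ∧ v 4 = -1) ∨
        (v 3 = 1 ∧ v 4 = 0) ∨
        (v 3 = 2 ∧ v 4 = -1) := by omega
    rcases key with ⟨h3, h4⟩ | ⟨h3, h4⟩ | ⟨h3, h4⟩ | ⟨h3, h4⟩ | ⟨h3, h4⟩ | ⟨h3, h4⟩ | ⟨h3, h4⟩ | ⟨h3, h4⟩ | ⟨h3, h4⟩ <;> (rw [vec_eq h0 h1 h2 h3 h4]; decide)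
  · have key : (v 3 = -1 ∧ v 4 = -1) ∨
        (v 3 = -1 ∧ v 4 = 0) ∨
        (v 3 = -1 ∧ v 4 = 1) ∨
        (v 3 = -1 ∧ v 4 = 2) ∨
        (v 3 = 0 ∧ v 4 = -1) ∨
        (v 3 = 0 ∧ v 4 = 1) ∨
        (v 3 = 1 ∧ v 4 = -1) ∨
        (v 3 = 1 ∧ v 4 = 0) ∨
        (v 3 = 2 ∧ v 4 = -1) := by omega
    rcases key with ⟨h3, h4⟩ | ⟨h3, h4⟩ | ⟨h3, h4⟩ | ⟨h3, h4⟩ | ⟨h3, h4⟩ | ⟨h3, h4⟩ | ⟨h3, h4⟩ | ⟨h3, h4⟩ | ⟨h3, h4⟩ <;> (rw [vec_eq h0 h1 h2 h3 h4]; decide)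
  · have key : (v 0 = -1 ∧ v 1 = -1) ∨
        (v 0 = -1 ∧ v 1 = 0) ∨
        (v 0 = -1 ∧ v 1 = 1) ∨
        (v 0 = -1 ∧ v 1 = 2) ∨
        (v 0 = 0 ∧ v 1 = -1) ∨
        (v 0 = 0 ∧ v 1 = 1) ∨
        (v 0 = 1 ∧ v 1 = -1) ∨
        (v 0 = 1 ∧ v 1 = 0) ∨
        (v 0 = 2 ∧ v 1 = -1) := by omega
    rcases hc with h2 | h2 <;> rcases key with ⟨h0, h1⟩ | ⟨h0, h1⟩ | ⟨h0, h1⟩ | ⟨h0, h1⟩ | ⟨h0, h1⟩ | ⟨h0, h1⟩ | ⟨h0, h1⟩ | ⟨h0, h1⟩ | ⟨h0, h1⟩ <;>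
      (rw [vec_eq h0 h1 h2 h3 h4]; decide)


/-- **`∇*` has exactly 39 lattice points.**
The lattice points of `∇*` are: the origin; the twelve vertices `ν₁,…,ν₁₂`; the two
points `±e₃`; and the 24 integer points `(ν_{3k+i} + 2ν_{3k+j})/3` for `k ∈ {0,1,2,3}`
and ordered pairs `i ≠ j` in `{1,2,3}` — each of which is indeed an integer vector. -/
theorem lattice_points_NablaStar :
    ({v : Fin 5 → ℤ | (fun i => ((v i : ℤ) : ℝ)) ∈ NablaStar} =
      (({0} ∪ Set.range nuN5) ∪ {![0, 0, -1, 0, 0], ![0, 0, 1, 0, 0]}) ∪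
        {p : Fin 5 → ℤ | ∃ (k : Fin 4) (i j : Fin 3), i ≠ j ∧
          (3 : ℤ) • p = nuN5 (nuIdx k i) + (2 : ℤ) • nuN5 (nuIdx k j)}) ∧
    (∀ (k : Fin 4) (i j : Fin 3), i ≠ j →
      ∃ p : Fin 5 → ℤ, (3 : ℤ) • p = nuN5 (nuIdx k i) + (2 : ℤ) • nuN5 (nuIdx k j)) ∧
    Set.ncard {v : Fin 5 → ℤ | (fun i => ((v i : ℤ) : ℝ)) ∈ NablaStar} = 39 := by
  have hPS : ∀ v : Fin 5 → ℤ, (fun i => ((v i : ℤ) : ℝ)) ∈ NablaStar → v ∈ Sfin := by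
    intro v hv
    have hP := hull_sub hv
    simp only [Pset, Set.mem_setOf_eq] at hP
    obtain ⟨p0, p1, p2, p3, p4, p5, p6, p7, p8, p9, p10, p11, p12, p13, p14⟩ := hP
    exact solve v (by exact_mod_cast p0) (by exact_mod_cast p1) (by exact_mod_cast p2) (by exact_mod_cast p3) (by exact_mod_cast p4) (by exact_mod_cast p5) (by exact_mod_cast p6) (by exact_mod_cast p7) (by exact_mod_cast p8) (by exact_mod_cast p9) (by exact_mod_cast p10) (by exact_mod_cast p11) (by exact_mod_cast p12) (by exact_mod_cast p13) (by exact_mod_cast p14)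
  have hSL : ∀ v ∈ Sfin, (fun i => ((v i : ℤ) : ℝ)) ∈ NablaStar := by
    intro v hv
    fin_cases hv
    · exact comb 5 5 5 1 1 1 (by norm_num) (by norm_num) (by norm_num) (by norm_num) _ (by decide)
    · exact comb 2 2 2 1 1 1 (by norm_num) (by norm_num) (by norm_num) (by norm_num) _ (by decide)
    · exact comb 4 5 5 1 1 1 (by norm_num) (by norm_num) (by norm_num) (by norm_num) _ (by decide)
    · exact comb 1 2 2 1 1 1 (by norm_num) (by norm_num) (by norm_num) (by norm_num) _ (by decide)
    · exact comb 4 4 5 1 1 1 (by norm_num) (by norm_num) (by norm_num) (by norm_num) _ (by decide)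
    · exact comb 1 1 2 1 1 1 (by norm_num) (by norm_num) (by norm_num) (by norm_num) _ (by decide)
    · exact comb 4 4 4 1 1 1 (by norm_num) (by norm_num) (by norm_num) (by norm_num) _ (by decide)
    · exact comb 1 1 1 1 1 1 (by norm_num) (by norm_num) (by norm_num) (by norm_num) _ (by decide)
    · exact comb 3 5 5 1 1 1 (by norm_num) (by norm_num) (by norm_num) (by norm_num) _ (by decide)
    · exact comb 0 2 2 1 1 1 (by norm_num) (by norm_num) (by norm_num) (by norm_num) _ (by decide)
    · exact comb 3 4 5 1 1 1 (by norm_num) (by norm_num) (by norm_num) (by norm_num) _ (by decide)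
    · exact comb 8 8 8 1 1 1 (by norm_num) (by norm_num) (by norm_num) (by norm_num) _ (by decide)
    · exact comb 7 8 8 1 1 1 (by norm_num) (by norm_num) (by norm_num) (by norm_num) _ (by decide)
    · exact comb 7 7 8 1 1 1 (by norm_num) (by norm_num) (by norm_num) (by norm_num) _ (by decide)
    · exact comb 7 7 7 1 1 1 (by norm_num) (by norm_num) (by norm_num) (by norm_num) _ (by decide)
    · exact comb 6 8 8 1 1 1 (by norm_num) (by norm_num) (by norm_num) (by norm_num) _ (by decide)
    · exact comb 0 1 2 1 1 1 (by norm_num) (by norm_num) (by norm_num) (by norm_num) _ (by decide)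
    · exact comb 6 7 7 1 1 1 (by norm_num) (by norm_num) (by norm_num) (by norm_num) _ (by decide)
    · exact comb 6 6 8 1 1 1 (by norm_num) (by norm_num) (by norm_num) (by norm_num) _ (by decide)
    · exact comb 6 6 7 1 1 1 (by norm_num) (by norm_num) (by norm_num) (by norm_num) _ (by decide)
    · exact comb 6 6 6 1 1 1 (by norm_num) (by norm_num) (by norm_num) (by norm_num) _ (by decide)
    · exact comb 11 11 11 1 1 1 (by norm_num) (by norm_num) (by norm_num) (by norm_num) _ (by decide)
    · exact comb 10 11 11 1 1 1 (by norm_num) (by norm_num) (by norm_num) (by norm_num) _ (by decide)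
    · exact comb 10 10 11 1 1 1 (by norm_num) (by norm_num) (by norm_num) (by norm_num) _ (by decide)
    · exact comb 10 10 10 1 1 1 (by norm_num) (by norm_num) (by norm_num) (by norm_num) _ (by decide)
    · exact comb 9 11 11 1 1 1 (by norm_num) (by norm_num) (by norm_num) (by norm_num) _ (by decide)
    · exact comb 9 10 11 1 1 1 (by norm_num) (by norm_num) (by norm_num) (by norm_num) _ (by decide)
    · exact comb 9 10 10 1 1 1 (by norm_num) (by norm_num) (by norm_num) (by norm_num) _ (by decide)
    · exact comb 9 9 11 1 1 1 (by norm_num) (by norm_num) (by norm_num) (by norm_num) _ (by decide)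
    · exact comb 9 9 10 1 1 1 (by norm_num) (by norm_num) (by norm_num) (by norm_num) _ (by decide)
    · exact comb 9 9 9 1 1 1 (by norm_num) (by norm_num) (by norm_num) (by norm_num) _ (by decide)
    · exact comb 3 4 4 1 1 1 (by norm_num) (by norm_num) (by norm_num) (by norm_num) _ (by decide)
    · exact comb 0 1 1 1 1 1 (by norm_num) (by norm_num) (by norm_num) (by norm_num) _ (by decide)
    · exact comb 3 3 5 1 1 1 (by norm_num) (by norm_num) (by norm_num) (by norm_num) _ (by decide)
    · exact comb 0 0 2 1 1 1 (by norm_num) (by norm_num) (by norm_num) (by norm_num) _ (by decide)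
    · exact comb 3 3 4 1 1 1 (by norm_num) (by norm_num) (by norm_num) (by norm_num) _ (by decide)
    · exact comb 0 0 1 1 1 1 (by norm_num) (by norm_num) (by norm_num) (by norm_num) _ (by decide)
    · exact comb 3 3 3 1 1 1 (by norm_num) (by norm_num) (by norm_num) (by norm_num) _ (by decide)
    · exact comb 0 0 0 1 1 1 (by norm_num) (by norm_num) (by norm_num) (by norm_num) _ (by decide)
  have hSR : ∀ v ∈ Sfin,
      v ∈ ((({0} ∪ Set.range nuN5) ∪ {![0, 0, -1, 0, 0], ![0, 0, 1, 0, 0]}) ∪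
        {p : Fin 5 → ℤ | ∃ (k : Fin 4) (i j : Fin 3), i ≠ j ∧
          (3 : ℤ) • p = nuN5 (nuIdx k i) + (2 : ℤ) • nuN5 (nuIdx k j)}) := by
    intro v hv
    fin_cases hv
    · exact Set.mem_union_left _ (Set.mem_union_left _ (Set.mem_union_right _ (Set.mem_range.mpr ⟨5, by decide⟩)))
    · exact Set.mem_union_left _ (Set.mem_union_left _ (Set.mem_union_right _ (Set.mem_range.mpr ⟨2, by decide⟩)))
    · exact Set.mem_union_right _ ⟨1, 1, 2, by decide, by decide⟩
    · exact Set.mem_union_right _ ⟨0, 1, 2, by decide, by decide⟩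
    · exact Set.mem_union_right _ ⟨1, 2, 1, by decide, by decide⟩
    · exact Set.mem_union_right _ ⟨0, 2, 1, by decide, by decide⟩
    · exact Set.mem_union_left _ (Set.mem_union_left _ (Set.mem_union_right _ (Set.mem_range.mpr ⟨4, by decide⟩)))
    · exact Set.mem_union_left _ (Set.mem_union_left _ (Set.mem_union_right _ (Set.mem_range.mpr ⟨1, by decide⟩)))
    · exact Set.mem_union_right _ ⟨1, 0, 2, by decide, by decide⟩
    · exact Set.mem_union_right _ ⟨0, 0, 2, by decide, by decide⟩
    · exact Set.mem_union_left _ (Set.mem_union_right _ (Set.mem_insert_iff.mpr (Or.inl (by decide))))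
    · exact Set.mem_union_left _ (Set.mem_union_left _ (Set.mem_union_right _ (Set.mem_range.mpr ⟨8, by decide⟩)))
    · exact Set.mem_union_right _ ⟨2, 1, 2, by decide, by decide⟩
    · exact Set.mem_union_right _ ⟨2, 2, 1, by decide, by decide⟩
    · exact Set.mem_union_left _ (Set.mem_union_left _ (Set.mem_union_right _ (Set.mem_range.mpr ⟨7, by decide⟩)))
    · exact Set.mem_union_right _ ⟨2, 0, 2, by decide, by decide⟩
    · exact Set.mem_union_left _ (Set.mem_union_left _ (Set.mem_union_left _ (Set.mem_singleton_iff.mpr (by decide))))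
    · exact Set.mem_union_right _ ⟨2, 0, 1, by decide, by decide⟩
    · exact Set.mem_union_right _ ⟨2, 2, 0, by decide, by decide⟩
    · exact Set.mem_union_right _ ⟨2, 1, 0, by decide, by decide⟩
    · exact Set.mem_union_left _ (Set.mem_union_left _ (Set.mem_union_right _ (Set.mem_range.mpr ⟨6, by decide⟩)))
    · exact Set.mem_union_left _ (Set.mem_union_left _ (Set.mem_union_right _ (Set.mem_range.mpr ⟨11, by decide⟩)))
    · exact Set.mem_union_right _ ⟨3, 1, 2, by decide, by decide⟩
    · exact Set.mem_union_right _ ⟨3, 2, 1, by decide, by decide⟩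
    · exact Set.mem_union_left _ (Set.mem_union_left _ (Set.mem_union_right _ (Set.mem_range.mpr ⟨10, by decide⟩)))
    · exact Set.mem_union_right _ ⟨3, 0, 2, by decide, by decide⟩
    · exact Set.mem_union_left _ (Set.mem_union_right _ (Set.mem_insert_iff.mpr (Or.inr (Set.mem_singleton_iff.mpr (by decide)))))
    · exact Set.mem_union_right _ ⟨3, 0, 1, by decide, by decide⟩
    · exact Set.mem_union_right _ ⟨3, 2, 0, by decide, by decide⟩
    · exact Set.mem_union_right _ ⟨3, 1, 0, by decide, by decide⟩
    · exact Set.mem_union_left _ (Set.mem_union_left _ (Set.mem_union_right _ (Set.mem_range.mpr ⟨9, by decide⟩)))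
    · exact Set.mem_union_right _ ⟨1, 0, 1, by decide, by decide⟩
    · exact Set.mem_union_right _ ⟨0, 0, 1, by decide, by decide⟩
    · exact Set.mem_union_right _ ⟨1, 2, 0, by decide, by decide⟩
    · exact Set.mem_union_right _ ⟨0, 2, 0, by decide, by decide⟩
    · exact Set.mem_union_right _ ⟨1, 1, 0, by decide, by decide⟩
    · exact Set.mem_union_right _ ⟨0, 1, 0, by decide, by decide⟩
    · exact Set.mem_union_left _ (Set.mem_union_left _ (Set.mem_union_right _ (Set.mem_range.mpr ⟨3, by decide⟩)))
    · exact Set.mem_union_left _ (Set.mem_union_left _ (Set.mem_union_right _ (Set.mem_range.mpr ⟨0, by decide⟩)))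
  have hRL : ((({0} ∪ Set.range nuN5) ∪ {![0, 0, -1, 0, 0], ![0, 0, 1, 0, 0]}) ∪
        {p : Fin 5 → ℤ | ∃ (k : Fin 4) (i j : Fin 3), i ≠ j ∧
          (3 : ℤ) • p = nuN5 (nuIdx k i) + (2 : ℤ) • nuN5 (nuIdx k j)}) ⊆
      {v : Fin 5 → ℤ | (fun i => ((v i : ℤ) : ℝ)) ∈ NablaStar} := by
    rintro v (((h | h) | h) | h)
    · rw [Set.mem_singleton_iff] at h
      subst h
      exact comb 0 1 2 1 1 1 (by norm_num) (by norm_num) (by norm_num) (by norm_num) _ (by decide)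
    · obtain ⟨j, rfl⟩ := h
      exact NablaStar_def ▸ subset_convexHull ℝ _ ⟨j, rfl⟩
    · rw [Set.mem_insert_iff, Set.mem_singleton_iff] at h
      rcases h with rfl | rfl
      · exact comb 3 4 5 1 1 1 (by norm_num) (by norm_num) (by norm_num) (by norm_num) _ (by decide)
      · exact comb 9 10 11 1 1 1 (by norm_num) (by norm_num) (by norm_num) (by norm_num) _ (by decide)
    · obtain ⟨k, i, j, hij, hp⟩ := h
      refine comb (nuIdx k i) (nuIdx k j) (nuIdx k j) 1 2 0 (by norm_num) (by norm_num)
        (by norm_num) (by norm_num) v (fun t => ?_)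
      have := congrFun hp t
      simp only [Pi.smul_apply, Pi.add_apply, smul_eq_mul] at this
      omega
  have hmain : {v : Fin 5 → ℤ | (fun i => ((v i : ℤ) : ℝ)) ∈ NablaStar} = ↑Sfin :=
    Set.Subset.antisymm (fun v hv => hPS v hv) (fun v hv => hSL v hv)
  refine ⟨Set.Subset.antisymm (fun v hv => hSR v (hPS v hv)) hRL, ?_, ?_⟩
  · intro k i j _
    refine ⟨fun t => (nuN5 (nuIdx k i) t + 2 * nuN5 (nuIdx k j) t) / 3, ?_⟩
    revert k i j
    decide
  · rw [hmain, Set.ncard_coe_finset]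
    decide
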